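/- (Main privacy theorem, per-count form) Let ε > 0, 0 < p ≤ 1 − e^{−ε}, q = 1 − e^{−ε}(1 − p), and τ ≥ 1 a natural-number threshold. Define the thresholding map T_τ : ℕ → ℕ by T_τ(v) = v if v ≥ τ and T_τ(v) = 0 otherwise, and for each k ∈ ℕ let M_k be the probability distribution of T_τ applied to a Binomial(k,p) random variable. Then for every k ≥ 1 and every set S ⊆ ℕ of outputs, both Pr[M_k ∈ S] ≤ e^{ε}·Pr[M_{k−1} ∈ S] + δ and Pr[M_{k−1} ∈ S] ≤ e^{ε}·Pr[M_k ∈ S] + δ hold with δ = exp(−(τ/q)·D(q‖p)), where D(q‖p) = q·ln(q/p) + (1−q)·ln((1−q)/(1−p)). -/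

import Mathlib

/-- Kullback–Leibler divergence between Bernoulli(q) and Bernoulli(p). -/
noncomputable def klBernoulli (q p : ℝ) : ℝ :=
  q * Real.log (q / p) + (1 - q) * Real.log ((1 - q) / (1 - p))

/-- `Pr[M_k ∈ S]`: the probability that the threshold map `T_τ` (reporting a count `v`
if `v ≥ τ` and `0` otherwise) applied to a Binomial(k,p) sample lands in `S ⊆ ℕ`. -/
noncomputable def mechProb (p : ℝ) (τ k : ℕ) (S : Set ℕ) : ℝ :=
  ∑ v ∈ Finset.range (k + 1),
    S.indicator (fun _ => (k.choose v : ℝ) * p ^ v * (1 - p) ^ (k - v))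
      (if τ ≤ v then v else 0)

namespace SAT

noncomputable def b (p : ℝ) (k v : ℕ) : ℝ := (k.choose v : ℝ) * p ^ v * (1 - p) ^ (k - v)

lemma b_nonneg {p : ℝ} (h0 : 0 ≤ p) (h1 : p ≤ 1) (k v : ℕ) : 0 ≤ b p k v :=
  mul_nonneg (mul_nonneg (Nat.cast_nonneg _) (pow_nonneg h0 _))
    (pow_nonneg (by linarith) _)

lemma b_zero {p : ℝ} {k v : ℕ} (h : k < v) : b p k v = 0 := by
  simp [b, Nat.choose_eq_zero_of_lt h]

lemma nat_id (n v : ℕ) : (n + 1) * n.choose v = (n + 1).choose v * (n + 1 - v) := by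
  have h1 := Nat.add_one_mul_choose_eq n v
  have h2 := Nat.choose_succ_right_eq (n + 1) v
  omega

lemma b_ratio {p : ℝ} {n v : ℕ} (h : v ≤ n) :
    ((n : ℝ) + 1) * (1 - p) * b p n v = ((n + 1 - v : ℕ) : ℝ) * b p (n + 1) v := by
  obtain ⟨m, rfl⟩ : ∃ m, n = v + m := ⟨n - v, by omega⟩
  have h1 : v + m - v = m := by omega
  have h2 : v + m + 1 - v = m + 1 := by omega
  have h3 := nat_id (v + m) v
  rw [h2] at h3
  have h4 := congrArg (Nat.cast (R := ℝ)) h3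
  push_cast at h4
  unfold b
  rw [h1, h2]
  push_cast
  linear_combination (p ^ v * (1 - p) ^ (m + 1)) * h4

lemma b_rec (p : ℝ) (k v : ℕ) :
    b p (k + 1) (v + 1) = (1 - p) * b p k (v + 1) + p * b p k v := by
  rcases lt_trichotomy v k with h | rfl | h
  · obtain ⟨m, rfl⟩ : ∃ m, k = v + 1 + m := ⟨k - (v + 1), by omega⟩
    unfold b
    rw [Nat.choose_succ_succ]
    have e1 : v + 1 + m + 1 - (v + 1) = m + 1 := by omega
    have e2 : v + 1 + m - (v + 1) = m := by omega
    have e3 : v + 1 + m - v = m + 1 := by omega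
    rw [e1, e2, e3]
    push_cast
    ring
  · simp [b, Nat.choose_self, Nat.choose_succ_self_right, Nat.choose_eq_zero_of_lt (Nat.lt_succ_self v), pow_succ]
    ring
  · simp [b, Nat.choose_eq_zero_of_lt h, Nat.choose_eq_zero_of_lt (Nat.lt_succ_of_lt h),
      Nat.choose_eq_zero_of_lt (Nat.succ_lt_succ h)]

lemma b_rec_zero (p : ℝ) (k : ℕ) : b p (k + 1) 0 = (1 - p) * b p k 0 := by
  simp [b, pow_succ]
  ring

lemma sum_b_mono {p : ℝ} (h0 : 0 ≤ p) (h1 : p ≤ 1) (k τ : ℕ) :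
    ∑ v ∈ Finset.range τ, b p (k + 1) v ≤ ∑ v ∈ Finset.range τ, b p k v := by
  rcases τ with _ | m
  · simp
  rw [Finset.sum_range_succ' (fun v => b p (k + 1) v),
    Finset.sum_range_succ' (fun v => b p k v)]
  have hlow : ∑ i ∈ Finset.range m, b p k i
      ≤ ∑ i ∈ Finset.range m, b p k (i + 1) + b p k 0 := by
    rw [← Finset.sum_range_succ' (fun v => b p k v)]
    exact Finset.sum_le_sum_of_subset_of_nonneg (Finset.range_subset_range.2 (Nat.le_succ m))
      (fun i _ _ => b_nonneg h0 h1 k i)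
  calc ∑ i ∈ Finset.range m, b p (k + 1) (i + 1) + b p (k + 1) 0
      = (1 - p) * (∑ i ∈ Finset.range m, b p k (i + 1) + b p k 0)
        + p * ∑ i ∈ Finset.range m, b p k i := by
        rw [b_rec_zero]
        simp only [b_rec]
        rw [Finset.sum_add_distrib, ← Finset.mul_sum, ← Finset.mul_sum]
        ring
    _ ≤ (1 - p) * (∑ i ∈ Finset.range m, b p k (i + 1) + b p k 0)
        + p * (∑ i ∈ Finset.range m, b p k (i + 1) + b p k 0) := by
        gcongr
    _ = ∑ i ∈ Finset.range m, b p k (i + 1) + b p k 0 := by ring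

lemma sum_b_mul (p x : ℝ) (k : ℕ) :
    ∑ v ∈ Finset.range (k + 1), b p k v * x ^ v = (p * x + (1 - p)) ^ k := by
  rw [add_pow]
  apply Finset.sum_congr rfl
  intro v _
  unfold b
  rw [mul_pow]
  ring

lemma chernoff_aux {p x : ℝ} (h0 : 0 ≤ p) (h1 : p ≤ 1) (hx : 1 ≤ x) (k : ℕ) (a : ℝ)
    (F : Finset ℕ) (hF : ∀ v ∈ F, a ≤ (v : ℝ)) :
    ∑ v ∈ F, b p k v ≤ Real.exp (-(a * Real.log x)) * (p * x + (1 - p)) ^ k := by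
  have hx0 : (0 : ℝ) < x := lt_of_lt_of_le one_pos hx
  have hlog : 0 ≤ Real.log x := Real.log_nonneg hx
  have step1 : ∀ v ∈ F, b p k v ≤ Real.exp (-(a * Real.log x)) * (b p k v * x ^ v) := by
    intro v hv
    have hxv : x ^ v = Real.exp ((v : ℝ) * Real.log x) := by
      rw [Real.exp_nat_mul, Real.exp_log hx0]
    have h1le : 1 ≤ Real.exp (-(a * Real.log x)) * x ^ v := by
      rw [hxv, ← Real.exp_add]
      apply Real.one_le_exp
      have := mul_nonneg (sub_nonneg.2 (hF v hv)) hlog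
      nlinarith
    calc b p k v = b p k v * 1 := (mul_one _).symm
      _ ≤ b p k v * (Real.exp (-(a * Real.log x)) * x ^ v) :=
          mul_le_mul_of_nonneg_left h1le (b_nonneg h0 h1 k v)
      _ = Real.exp (-(a * Real.log x)) * (b p k v * x ^ v) := by ring
  calc ∑ v ∈ F, b p k v ≤ ∑ v ∈ F, Real.exp (-(a * Real.log x)) * (b p k v * x ^ v) :=
        Finset.sum_le_sum step1
    _ = Real.exp (-(a * Real.log x)) * ∑ v ∈ F, b p k v * x ^ v := by
        rw [Finset.mul_sum]
    _ ≤ Real.exp (-(a * Real.log x)) * ∑ v ∈ Finset.range (k + 1), b p k v * x ^ v := by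
        apply mul_le_mul_of_nonneg_left _ (Real.exp_nonneg _)
        have e : ∑ v ∈ Finset.range (k + 1), b p k v * x ^ v
            = ∑ v ∈ F ∪ Finset.range (k + 1), b p k v * x ^ v := by
          apply Finset.sum_subset Finset.subset_union_right
          intro v _ hvn
          have : k < v := by
            by_contra hc
            exact hvn (Finset.mem_range.2 (by omega))
          rw [b_zero this, zero_mul]
        rw [e]
        exact Finset.sum_le_sum_of_subset_of_nonneg Finset.subset_union_left
          (fun v _ _ => mul_nonneg (b_nonneg h0 h1 k v) (pow_nonneg hx0.le v))
    _ = Real.exp (-(a * Real.log x)) * (p * x + (1 - p)) ^ k := by rw [sum_b_mul]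

lemma key_ineq (ε q t a τr nr : ℝ) (hε : 0 < ε) (hq0 : 0 < q) (ht0 : 0 ≤ t)
    (ha1 : τr ≤ a) (ha2 : (nr + 1) * q ≤ a) (hkl : 0 ≤ q * (t + ε) - ε) :
    (-(a * (t + ε)) + (nr + 1) * ε) * q ≤ -(τr * (q * (t + ε) - ε)) := by
  rcases le_or_gt ((nr + 1) * q) τr with hc | hc
  · nlinarith [mul_nonneg hq0.le (mul_nonneg (sub_nonneg.2 ha1) (by linarith : (0:ℝ) ≤ t + ε)),
      mul_nonneg hε.le (sub_nonneg.2 hc)]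
  · nlinarith [mul_nonneg hq0.le (mul_nonneg (mul_nonneg hq0.le (by linarith : (0:ℝ) ≤ t + ε))
        (sub_nonneg.2 ha2)),
      mul_nonneg hkl (sub_nonneg.2 hc.le)]

lemma klBernoulli_nonneg {p q : ℝ} (hp0 : 0 < p) (hp1 : p < 1) (hq0 : 0 < q) (hq1 : q < 1) :
    0 ≤ klBernoulli q p := by
  have h1 : Real.log (p / q) ≤ p / q - 1 := Real.log_le_sub_one_of_pos (div_pos hp0 hq0)
  have h2 : Real.log ((1 - p) / (1 - q)) ≤ (1 - p) / (1 - q) - 1 :=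
    Real.log_le_sub_one_of_pos (div_pos (by linarith) (by linarith))
  have e1 : Real.log (q / p) = -Real.log (p / q) := by
    rw [← Real.log_inv, inv_div]
  have e2 : Real.log ((1 - q) / (1 - p)) = -Real.log ((1 - p) / (1 - q)) := by
    rw [← Real.log_inv, inv_div]
  have hq1' : (0 : ℝ) < 1 - q := by linarith
  have m1 : q * Real.log (p / q) ≤ q * (p / q - 1) := mul_le_mul_of_nonneg_left h1 hq0.le
  have m2 : (1 - q) * Real.log ((1 - p) / (1 - q)) ≤ (1 - q) * ((1 - p) / (1 - q) - 1) :=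
    mul_le_mul_of_nonneg_left h2 hq1'.le
  have s1 : q * (p / q - 1) = p - q := by field_simp
  have s2 : (1 - q) * ((1 - p) / (1 - q) - 1) = q - p := by field_simp; ring
  unfold klBernoulli
  rw [e1, e2]
  nlinarith [m1, m2]


end SAT

open SAT

/-- Main privacy theorem (per-count form): the sample-and-threshold mechanism on
neighboring counts `k` and `k-1` satisfies `(ε, δ)`-DP with
`δ = exp(−(τ/q)·D(q‖p))`, `q = 1 - e^{-ε}(1-p)`. -/
theorem sample_and_threshold_dp (ε p : ℝ) (hε : 0 < ε) (hp0 : 0 < p)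
    (hp : p ≤ 1 - Real.exp (-ε)) (τ : ℕ) (hτ : 1 ≤ τ) (k : ℕ) (hk : 1 ≤ k)
    (S : Set ℕ) :
    mechProb p τ k S ≤ Real.exp ε * mechProb p τ (k - 1) S +
        Real.exp (-((τ : ℝ) / (1 - Real.exp (-ε) * (1 - p))) *
          klBernoulli (1 - Real.exp (-ε) * (1 - p)) p) ∧
      mechProb p τ (k - 1) S ≤ Real.exp ε * mechProb p τ k S +
        Real.exp (-((τ : ℝ) / (1 - Real.exp (-ε) * (1 - p))) *
          klBernoulli (1 - Real.exp (-ε) * (1 - p)) p) := by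
  classical
  obtain ⟨n, rfl⟩ : ∃ n, k = n + 1 := ⟨k - 1, by omega⟩
  simp only [Nat.add_sub_cancel]
  set q : ℝ := 1 - Real.exp (-ε) * (1 - p) with hq_def
  have hexppos : 0 < Real.exp (-ε) := Real.exp_pos _
  have hexpneg : Real.exp (-ε) < 1 := by
    rw [Real.exp_lt_one_iff]; linarith
  have hp1 : p < 1 := by nlinarith
  have h1p : (0 : ℝ) < 1 - p := by linarith
  have h1q : 1 - q = Real.exp (-ε) * (1 - p) := by rw [hq_def]; ring
  have hq1 : q < 1 := by nlinarith
  have hpq : p < q := by nlinarith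
  have hq0 : 0 < q := lt_trans hp0 hpq
  have hElarge : Real.exp (-ε) ≤ 1 - p := by linarith
  have hE1 : (1 : ℝ) ≤ Real.exp ε := Real.one_le_exp hε.le
  have hEinv : Real.exp (-ε) * Real.exp ε = 1 := by
    rw [← Real.exp_add]; simp
  set δ : ℝ := Real.exp (-((τ : ℝ) / q) * klBernoulli q p) with hδ_def
  have hδ0 : 0 < δ := Real.exp_pos _
  -- indicator coefficient
  set χ : ℕ → ℝ := fun v => if (if τ ≤ v then v else 0) ∈ S then 1 else 0 with hχ_def
  have hχ0 : ∀ v, 0 ≤ χ v := by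
    intro v; rw [hχ_def]; dsimp only; split_ifs <;> norm_num
  have hχ1 : ∀ v, χ v ≤ 1 := by
    intro v; rw [hχ_def]; dsimp only; split_ifs <;> norm_num
  set c0 : ℝ := if (0 : ℕ) ∈ S then 1 else 0 with hc0_def
  have hc00 : 0 ≤ c0 := by rw [hc0_def]; split <;> norm_num
  have hχlow : ∀ v, v < τ → χ v = c0 := by
    intro v hv
    rw [hχ_def, hc0_def]
    simp [Nat.not_le.2 hv]
  set N : ℕ := n + 2 + τ with hN_def
  have mech_eq : ∀ j, mechProb p τ j S
      = ∑ v ∈ Finset.range (j + 1), χ v * b p j v := by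
    intro j
    unfold mechProb
    apply Finset.sum_congr rfl
    intro v _
    by_cases h : (if τ ≤ v then v else 0) ∈ S <;>
      simp [h, hχ_def, b, Set.indicator_of_mem, Set.indicator_of_notMem]
  have ext : ∀ j, j + 1 ≤ N → mechProb p τ j S = ∑ v ∈ Finset.range N, χ v * b p j v := by
    intro j hj
    rw [mech_eq j]
    apply Finset.sum_subset (Finset.range_subset_range.2 hj)
    intro v hv hvn
    have : j < v := by
      have := Finset.mem_range.1 hv
      by_contra hc
      exact hvn (Finset.mem_range.2 (by omega))
    rw [b_zero this, mul_zero]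
  have hsplit : ∀ g : ℕ → ℝ, ∑ v ∈ Finset.range N, g v
      = ∑ v ∈ Finset.range τ, g v + ∑ v ∈ Finset.Ico τ N, g v := by
    intro g
    rw [Finset.range_eq_Ico, Finset.range_eq_Ico]
    exact (Finset.sum_Ico_consecutive g (Nat.zero_le τ) (show τ ≤ N by omega)).symm
  set A : ℕ → ℝ := fun j => ∑ v ∈ Finset.range τ, b p j v with hA_def
  have hAnn : ∀ j, 0 ≤ A j := fun j =>
    Finset.sum_nonneg fun v _ => b_nonneg hp0.le hp1.le j v
  have decomp : ∀ j, j + 1 ≤ N → mechProb p τ j S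
      = c0 * A j + ∑ v ∈ Finset.Ico τ N, χ v * b p j v := by
    intro j hj
    rw [ext j hj, hsplit, hA_def]
    congr 1
    rw [Finset.mul_sum]
    apply Finset.sum_congr rfl
    intro v hv
    rw [hχlow v (Finset.mem_range.1 hv)]
  -- reverse direction term bound
  have rev_term : ∀ v, b p n v ≤ Real.exp ε * b p (n + 1) v := by
    intro v
    rcases le_or_gt v n with h | h
    · have hr := b_ratio (p := p) h
      have hb1 : 0 ≤ b p (n + 1) v := b_nonneg hp0.le hp1.le (n + 1) v
      have hbn : 0 ≤ b p n v := b_nonneg hp0.le hp1.le n v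
      have hcast : ((n + 1 - v : ℕ) : ℝ) ≤ (n : ℝ) + 1 := by
        have : ((n + 1 - v : ℕ) : ℝ) ≤ ((n + 1 : ℕ) : ℝ) := Nat.cast_le.2 (by omega)
        push_cast at this; linarith
      have h2 : ((n : ℝ) + 1) * ((1 - p) * b p n v) ≤ ((n : ℝ) + 1) * b p (n + 1) v := by
        calc ((n : ℝ) + 1) * ((1 - p) * b p n v)
            = ((n + 1 - v : ℕ) : ℝ) * b p (n + 1) v := by rw [← hr]; ring
          _ ≤ ((n : ℝ) + 1) * b p (n + 1) v := mul_le_mul_of_nonneg_right hcast hb1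
      have h3 : (1 - p) * b p n v ≤ b p (n + 1) v :=
        le_of_mul_le_mul_left h2 (by positivity)
      have h4 : Real.exp (-ε) * b p n v ≤ b p (n + 1) v :=
        le_trans (by nlinarith) h3
      have h5 := mul_le_mul_of_nonneg_left h4 (Real.exp_nonneg ε)
      calc b p n v = Real.exp ε * (Real.exp (-ε) * b p n v) := by
            rw [← mul_assoc, mul_comm (Real.exp ε), hEinv, one_mul]
        _ ≤ Real.exp ε * b p (n + 1) v := h5
    · rw [b_zero h]
      exact mul_nonneg (Real.exp_nonneg _) (b_nonneg hp0.le hp1.le (n + 1) v)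
  -- reverse direction
  have reverse : mechProb p τ n S ≤ Real.exp ε * mechProb p τ (n + 1) S + δ := by
    have : mechProb p τ n S ≤ Real.exp ε * mechProb p τ (n + 1) S := by
      rw [ext n (by omega), ext (n + 1) (by omega), Finset.mul_sum]
      apply Finset.sum_le_sum
      intro v _
      have := mul_le_mul_of_nonneg_left (rev_term v) (hχ0 v)
      calc χ v * b p n v ≤ χ v * (Real.exp ε * b p (n + 1) v) := this
        _ = Real.exp ε * (χ v * b p (n + 1) v) := by ring
    linarith
  -- forward good term bound
  have good_term : ∀ v : ℕ, (v : ℝ) ≤ ((n : ℝ) + 1) * q →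
      b p (n + 1) v ≤ Real.exp ε * b p n v := by
    intro v hv
    have hvn : v ≤ n := by
      have h1 : (v : ℝ) < ((n + 1 : ℕ) : ℝ) := by push_cast; nlinarith
      exact Nat.lt_succ_iff.1 (by exact_mod_cast h1)
    have hr := b_ratio (p := p) (n := n) (v := v) hvn
    have hb1 : 0 ≤ b p (n + 1) v := b_nonneg hp0.le hp1.le (n + 1) v
    have hcast : ((n + 1 - v : ℕ) : ℝ) = (n : ℝ) + 1 - (v : ℝ) := by
      rw [Nat.cast_sub (by omega)]
      push_cast
      ring
    have hB : 0 < ((n : ℝ) + 1) * (Real.exp (-ε) * (1 - p)) := by positivity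
    have hA2 : ((n : ℝ) + 1) * (Real.exp (-ε) * (1 - p)) ≤ (n : ℝ) + 1 - (v : ℝ) := by
      have e : ((n : ℝ) + 1) * (1 - q) = ((n : ℝ) + 1) * (Real.exp (-ε) * (1 - p)) := by
        rw [h1q]
      nlinarith
    have key : ((n : ℝ) + 1) * (Real.exp (-ε) * (1 - p)) * b p (n + 1) v
        ≤ ((n : ℝ) + 1) * (Real.exp (-ε) * (1 - p)) * (Real.exp ε * b p n v) := by
      have e1 : ((n : ℝ) + 1) * (Real.exp (-ε) * (1 - p)) * (Real.exp ε * b p n v)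
          = ((n : ℝ) + 1) * (1 - p) * b p n v := by
        linear_combination ((n : ℝ) + 1) * (1 - p) * b p n v * hEinv
      rw [e1, hr, hcast]
      exact mul_le_mul_of_nonneg_right hA2 hb1
    exact le_of_mul_le_mul_left key hB
  -- Chernoff bound for the bad set
  set x : ℝ := q / p * Real.exp ε with hx_def
  have hx1 : (1 : ℝ) ≤ x := by
    have h1 : (1 : ℝ) ≤ q / p := (one_le_div hp0).2 hpq.le
    calc (1 : ℝ) = 1 * 1 := (one_mul 1).symm
      _ ≤ q / p * Real.exp ε := mul_le_mul h1 hE1 zero_le_one (by linarith)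
  have hpx : p * x + (1 - p) = Real.exp ε := by
    have h1 : p * x = q * Real.exp ε := by
      rw [hx_def]; field_simp
    rw [h1, hq_def]
    linear_combination (p - 1) * hEinv
  set a : ℝ := max (τ : ℝ) (((n : ℝ) + 1) * q) with ha_def
  have ha1 : (τ : ℝ) ≤ a := le_max_left _ _
  have ha2 : ((n : ℝ) + 1) * q ≤ a := le_max_right _ _
  set t : ℝ := Real.log (q / p) with ht_def
  have ht0 : 0 ≤ t := Real.log_nonneg ((one_le_div hp0).2 hpq.le)
  have hlogx : Real.log x = t + ε := by
    rw [hx_def, Real.log_mul (ne_of_gt (div_pos hq0 hp0)) (ne_of_gt (Real.exp_pos ε)),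
      Real.log_exp, ht_def]
  have hklB : klBernoulli q p = q * (t + ε) - ε := by
    unfold klBernoulli
    have e : (1 - q) / (1 - p) = Real.exp (-ε) := by
      rw [h1q]
      field_simp
    rw [e, Real.log_exp, ← ht_def]
    ring
  have hklnn : 0 ≤ q * (t + ε) - ε := by
    rw [← hklB]
    exact klBernoulli_nonneg hp0 hp1 hq0 hq1
  have hδcomp : Real.exp (-(a * Real.log x)) * (p * x + (1 - p)) ^ (n + 1) ≤ δ := by
    rw [hpx, hδ_def, ← Real.exp_nat_mul, ← Real.exp_add]
    apply Real.exp_le_exp.2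
    have hg2 : (-(a * (t + ε)) + ((n : ℝ) + 1) * ε) * q ≤ -((τ : ℝ) * (q * (t + ε) - ε)) :=
      key_ineq ε q t a (τ : ℝ) (n : ℝ) hε hq0 ht0 ha1 ha2 hklnn
    rw [hlogx, hklB,
      show -((τ : ℝ) / q) * (q * (t + ε) - ε) = (-((τ : ℝ) * (q * (t + ε) - ε))) / q by ring,
      le_div_iff₀ hq0]
    push_cast
    linarith [hg2]
  -- forward direction
  have forward : mechProb p τ (n + 1) S ≤ Real.exp ε * mechProb p τ n S + δ := by
    have hbad : ∑ v ∈ (Finset.Ico τ N).filter (fun v : ℕ => ¬((v : ℝ) ≤ ((n : ℝ) + 1) * q)),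
        χ v * b p (n + 1) v ≤ δ := by
      have h1 : ∑ v ∈ (Finset.Ico τ N).filter (fun v : ℕ => ¬((v : ℝ) ≤ ((n : ℝ) + 1) * q)),
          χ v * b p (n + 1) v
          ≤ ∑ v ∈ (Finset.Ico τ N).filter (fun v : ℕ => ¬((v : ℝ) ≤ ((n : ℝ) + 1) * q)),
            b p (n + 1) v := by
        apply Finset.sum_le_sum
        intro v _
        calc χ v * b p (n + 1) v ≤ 1 * b p (n + 1) v :=
              mul_le_mul_of_nonneg_right (hχ1 v) (b_nonneg hp0.le hp1.le (n + 1) v)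
          _ = b p (n + 1) v := one_mul _
      refine le_trans h1 (le_trans (chernoff_aux hp0.le hp1.le hx1 (n + 1) a _ ?_) hδcomp)
      intro v hv
      obtain ⟨hv1, hv2⟩ := Finset.mem_filter.1 hv
      have hvτ : τ ≤ v := (Finset.mem_Ico.1 hv1).1
      apply max_le
      · exact_mod_cast hvτ
      · exact le_of_lt (lt_of_not_ge hv2)
    have hgood : ∑ v ∈ (Finset.Ico τ N).filter (fun v : ℕ => (v : ℝ) ≤ ((n : ℝ) + 1) * q),
        χ v * b p (n + 1) v
        ≤ Real.exp ε * ∑ v ∈ Finset.Ico τ N, χ v * b p n v := by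
      calc ∑ v ∈ (Finset.Ico τ N).filter (fun v : ℕ => (v : ℝ) ≤ ((n : ℝ) + 1) * q),
          χ v * b p (n + 1) v
          ≤ ∑ v ∈ (Finset.Ico τ N).filter (fun v : ℕ => (v : ℝ) ≤ ((n : ℝ) + 1) * q),
            Real.exp ε * (χ v * b p n v) := by
            apply Finset.sum_le_sum
            intro v hv
            have hP := (Finset.mem_filter.1 hv).2
            have := mul_le_mul_of_nonneg_left (good_term v hP) (hχ0 v)
            calc χ v * b p (n + 1) v ≤ χ v * (Real.exp ε * b p n v) := this
              _ = Real.exp ε * (χ v * b p n v) := by ring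
        _ = Real.exp ε * ∑ v ∈ (Finset.Ico τ N).filter (fun v : ℕ => (v : ℝ) ≤ ((n : ℝ) + 1) * q),
            χ v * b p n v := by rw [Finset.mul_sum]
        _ ≤ Real.exp ε * ∑ v ∈ Finset.Ico τ N, χ v * b p n v := by
            apply mul_le_mul_of_nonneg_left _ (Real.exp_nonneg _)
            exact Finset.sum_le_sum_of_subset_of_nonneg (Finset.filter_subset _ _)
              (fun v _ _ => mul_nonneg (hχ0 v) (b_nonneg hp0.le hp1.le n v))
    calc mechProb p τ (n + 1) S
        = c0 * A (n + 1) + ∑ v ∈ Finset.Ico τ N, χ v * b p (n + 1) v :=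
          decomp (n + 1) (by omega)
      _ ≤ c0 * A n + ∑ v ∈ Finset.Ico τ N, χ v * b p (n + 1) v := by
          have := mul_le_mul_of_nonneg_left (sum_b_mono hp0.le hp1.le n τ) hc00
          exact add_le_add_left this _
      _ = c0 * A n
          + (∑ v ∈ (Finset.Ico τ N).filter (fun v : ℕ => (v : ℝ) ≤ ((n : ℝ) + 1) * q),
              χ v * b p (n + 1) v
            + ∑ v ∈ (Finset.Ico τ N).filter (fun v : ℕ => ¬((v : ℝ) ≤ ((n : ℝ) + 1) * q)),
              χ v * b p (n + 1) v) := by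
          rw [Finset.sum_filter_add_sum_filter_not]
      _ ≤ c0 * A n + (Real.exp ε * ∑ v ∈ Finset.Ico τ N, χ v * b p n v + δ) :=
          add_le_add_right (add_le_add hgood hbad) _
      _ ≤ Real.exp ε * (c0 * A n + ∑ v ∈ Finset.Ico τ N, χ v * b p n v) + δ := by
          have h1 : 0 ≤ c0 * A n := mul_nonneg hc00 (hAnn n)
          have h2 : c0 * A n ≤ Real.exp ε * (c0 * A n) := le_mul_of_one_le_left h1 hE1
          linarith [h2]
      _ = Real.exp ε * mechProb p τ n S + δ := by rw [← decomp n (by omega)]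
  exact ⟨forward, reverse⟩
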